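/- Let c ≥ 0 be a real constant and let f : ℂ → ℂ be an entire (everywhere complex-differentiable) function satisfying f(z + 1) = f(z) for all z ∈ ℂ, and suppose there exists M > 0 such that |f(z)| ≤ M·e^{cπ|Im z|} for all z ∈ ℂ. Then for every integer n with 2|n| > c, the n-th Fourier coefficient a_n = ∫_0^1 f(x)·e^{-2πi n x} dx equals 0. -/

import Mathlib

open Complex Real

open Filter in
/-- If `f` is entire, `1`-periodic, and `|f z| ≤ M e^{cπ|Im z|}`, then the `n`-th Fourier
coefficient `∫_0^1 f x e^{-2πinx} dx` vanishes whenever `2|n| > c`. -/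
theorem fourier_coeff_vanish (c : ℝ) (hc : 0 ≤ c) (f : ℂ → ℂ)
    (hdiff : Differentiable ℂ f)
    (hper : ∀ z : ℂ, f (z + 1) = f z)
    (M : ℝ) (hM : 0 < M)
    (hbound : ∀ z : ℂ, ‖f z‖ ≤ M * Real.exp (c * Real.pi * |z.im|)) :
    ∀ n : ℤ, 2 * |(n : ℝ)| > c →
      (∫ x in (0:ℝ)..1, f x * Complex.exp (-2 * Real.pi * Complex.I * n * x)) = 0 := by
  intro n hn
  set g : ℂ → ℂ := fun z => f z * Complex.exp (-2 * Real.pi * Complex.I * n * z) with hg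
  have hgdiff : Differentiable ℂ g :=
    hdiff.mul (Complex.differentiable_exp.comp (differentiable_id.const_mul _))
  have hgper : ∀ z : ℂ, g (z + 1) = g z := by
    intro z
    simp only [hg, hper]
    congr 1
    rw [mul_add, Complex.exp_add, mul_one]
    have : Complex.exp (-2 * Real.pi * Complex.I * n) = 1 := by
      rw [show (-2 * Real.pi * Complex.I * n : ℂ) = (-n : ℤ) * (2 * Real.pi * Complex.I) by
        push_cast; ring]
      exact Complex.exp_int_mul_two_pi_mul_I (-n)
    rw [this, mul_one]
  -- contour shift
  have shift : ∀ y : ℝ, (∫ x in (0:ℝ)..1, g x) = ∫ x in (0:ℝ)..1, g (x + y * Complex.I) := by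
    intro y
    have H := Complex.integral_boundary_rect_eq_zero_of_differentiableOn g 0
      (1 + y * Complex.I) hgdiff.differentiableOn
    have h1 : ((1 : ℂ) + y * Complex.I).re = 1 := by simp
    have h2 : ((1 : ℂ) + y * Complex.I).im = y := by simp
    rw [h1, h2, Complex.zero_re, Complex.zero_im] at H
    have hv : ∀ t : ℝ, g (((1:ℝ):ℂ) + t * Complex.I) = g (((0:ℝ):ℂ) + t * Complex.I) := by
      intro t
      rw [show ((1:ℝ):ℂ) + t * Complex.I = (((0:ℝ):ℂ) + t * Complex.I) + 1 by push_cast; ring,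
        hgper]
    simp only [hv, Complex.ofReal_zero, zero_mul, add_zero, smul_eq_mul] at H
    linear_combination H
  -- norm bound on shifted integral
  have hnorm : ∀ y : ℝ, ‖∫ x in (0:ℝ)..1, g (x + y * Complex.I)‖ ≤
      M * Real.exp (c * Real.pi * |y| + 2 * Real.pi * n * y) := by
    intro y
    have := intervalIntegral.norm_integral_le_of_norm_le_const
      (C := M * Real.exp (c * Real.pi * |y| + 2 * Real.pi * n * y))
      (f := fun x : ℝ => g (x + y * Complex.I)) (a := 0) (b := 1) ?_
    · simpa using this
    · intro x _
      have him : ((x:ℂ) + y * Complex.I).im = y := by simp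
      have hexp : ‖Complex.exp (-2 * Real.pi * Complex.I * n *
          ((x:ℂ) + y * Complex.I))‖ = Real.exp (2 * Real.pi * n * y) := by
        rw [Complex.norm_exp]
        congr 1
        simp [Complex.mul_re, Complex.mul_im, Complex.add_re, Complex.add_im]
      calc ‖g ((x:ℂ) + y * Complex.I)‖
          = ‖f ((x:ℂ) + y * Complex.I)‖ *
            ‖Complex.exp (-2 * Real.pi * Complex.I * n *
              ((x:ℂ) + y * Complex.I))‖ := by simp [hg]
        _ ≤ (M * Real.exp (c * Real.pi * |y|)) * Real.exp (2 * Real.pi * n * y) := by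
            rw [hexp]
            apply mul_le_mul_of_nonneg_right _ (Real.exp_pos _).le
            simpa [him] using hbound ((x:ℂ) + y * Complex.I)
        _ = M * Real.exp (c * Real.pi * |y| + 2 * Real.pi * n * y) := by
            rw [Real.exp_add]; ring
  set A := ∫ x in (0:ℝ)..1, g x with hA
  set ε : ℝ := (2 * |(n:ℝ)| - c) * Real.pi with hε
  have hεpos : 0 < ε := mul_pos (by linarith) Real.pi_pos
  have key : ∀ t : ℝ, 0 ≤ t → ‖A‖ ≤ M * Real.exp (-ε * t) := by
    intro t ht
    set y : ℝ := if (0:ℝ) ≤ (n:ℝ) then -t else t with hy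
    have habs : |y| = t := by
      rw [hy]; split <;> simp [_root_.abs_of_nonneg ht, ht]
    have hny : (n:ℝ) * y = -(|(n:ℝ)| * t) := by
      rw [hy]; split
      next h => rw [_root_.abs_of_nonneg h]; ring
      next h => rw [abs_of_neg (not_le.mp h)]; ring
    calc ‖A‖ = ‖∫ x in (0:ℝ)..1, g (x + y * Complex.I)‖ := congrArg norm (shift y)
      _ ≤ M * Real.exp (c * Real.pi * |y| + 2 * Real.pi * n * y) := hnorm y
      _ = M * Real.exp (-ε * t) := by
          congr 2
          rw [habs, hε]
          rw [show 2 * Real.pi * (n:ℝ) * y = 2 * Real.pi * ((n:ℝ) * y) by ring, hny]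
          ring
  have htend : Tendsto (fun t : ℝ => M * Real.exp (-ε * t)) atTop (nhds 0) := by
    rw [show (0:ℝ) = M * 0 by ring]
    apply Tendsto.const_mul
    apply Real.tendsto_exp_atBot.comp
    exact (tendsto_const_mul_atBot_of_neg (by linarith)).mpr tendsto_id
  have hA0 : ‖A‖ ≤ 0 :=
    ge_of_tendsto htend (eventually_atTop.2 ⟨0, fun t ht => key t ht⟩)
  have : A = 0 := norm_le_zero_iff.mp hA0
  simpa [hA, hg] using this
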